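/- Let U : ℝ → Matrix (Fin m) (Fin n) ℂ be a differentiable family of complex m×n matrices and N ≥ 1 a natural number. Define M : ℝ → Matrix (Fin N × Fin m) (Fin n) ℂ by M(t) ((j, a), b) = U(t) (a, b) / √N (the matrix obtained by stacking N copies of U on top of each other and dividing by √N). Then for all s, t ∈ ℝ: (i) M(t)ᴴ · M(t) = U(t)ᴴ · U(t); (ii) M(t)ᴴ · M′(t) = U(t)ᴴ · U′(t); and (iii) Tr( (M·Mᴴ)′(s) · (M·Mᴴ)′(t) ) = Tr( (U·Uᴴ)′(s) · (U·Uᴴ)′(t) ). In particular, if U is a universal matrix for a family of connections then so is M, and the universal metrics g⁰ and g¹ built from U and from M agree. -/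

import Mathlib

open Matrix

/-- Entrywise derivative of a matrix-valued function of a real variable. -/
noncomputable def matDeriv {ι κ : Type*} (F : ℝ → Matrix ι κ ℂ) (t : ℝ) :
    Matrix ι κ ℂ :=
  fun i j => deriv (fun s => F s i j) t

/-- The matrix obtained by stacking `N` copies of `U` on top of each other and
dividing by `√N`. -/
noncomputable def stackU {m n : ℕ} (N : ℕ) (U : ℝ → Matrix (Fin m) (Fin n) ℂ) (t : ℝ) :
    Matrix (Fin N × Fin m) (Fin n) ℂ :=
  fun p b => U t p.2 b / ((Real.sqrt N : ℝ) : ℂ)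

/-- Stacking `N ≥ 1` copies of a universal matrix `U` (normalized by `1/√N`) changes
neither `Uᴴ U`, nor the connection component `Uᴴ U′`, nor the `g⁰`-integrand
`Tr((UUᴴ)′(s)·(UUᴴ)′(t))`; hence the stacked matrix is again universal and the
universal metrics `g⁰` and `g¹` of `U` and `M` agree. -/
theorem stacked_universal_matrix_same_metrics {m n : ℕ} (N : ℕ) (hN : 1 ≤ N)
    (U : ℝ → Matrix (Fin m) (Fin n) ℂ)
    (hU : ∀ i j, Differentiable ℝ (fun t => U t i j)) :
    (∀ t : ℝ, (stackU N U t)ᴴ * stackU N U t = (U t)ᴴ * U t) ∧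
    (∀ t : ℝ, (stackU N U t)ᴴ * matDeriv (stackU N U) t = (U t)ᴴ * matDeriv U t) ∧
    (∀ s t : ℝ,
      (matDeriv (fun u => stackU N U u * (stackU N U u)ᴴ) s *
          matDeriv (fun u => stackU N U u * (stackU N U u)ᴴ) t).trace =
        (matDeriv (fun u => U u * (U u)ᴴ) s *
          matDeriv (fun u => U u * (U u)ᴴ) t).trace) := by
  have hNC : (N : ℂ) ≠ 0 := Nat.cast_ne_zero.mpr (by omega)
  set cN : ℂ := ((Real.sqrt N : ℝ) : ℂ) with hc
  have hcc : cN * cN = (N : ℂ) := by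
    rw [hc, ← Complex.ofReal_mul, Real.mul_self_sqrt (Nat.cast_nonneg N)]
    simp
  have hstar : star cN = cN := by rw [hc]; exact Complex.conj_ofReal _
  have key : ∀ x y : ℂ, star (x / cN) * (y / cN) = star x * y / (N : ℂ) := by
    intro x y
    rw [star_div₀, hstar, div_mul_div_comm, hcc]
  have key2 : ∀ x y : ℂ, (x / cN) * star (y / cN) = x * star y / (N : ℂ) := by
    intro x y
    rw [star_div₀, hstar, div_mul_div_comm, hcc]
  refine ⟨?_, ?_, ?_⟩
  · intro t
    ext b b'
    simp only [mul_apply, conjTranspose_apply, stackU, ← hc, Fintype.sum_prod_type, key,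
      ← Finset.sum_div, Finset.sum_const, Finset.card_univ, Fintype.card_fin, nsmul_eq_mul,
      mul_div_cancel₀ _ hNC]
    rw [mul_div_cancel_left₀ _ hNC]
  · intro t
    have hD : ∀ (t : ℝ) (p : Fin N × Fin m) (b : Fin n),
        matDeriv (stackU N U) t p b = matDeriv U t p.2 b / cN := by
      intro t p b
      simp only [matDeriv, stackU]
      exact deriv_div_const _
    ext b b'
    simp only [mul_apply, conjTranspose_apply, stackU, ← hc, hD, Fintype.sum_prod_type, key,
      ← Finset.sum_div, Finset.sum_const, Finset.card_univ, Fintype.card_fin, nsmul_eq_mul,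
      mul_div_cancel₀ _ hNC]
    rw [mul_div_cancel_left₀ _ hNC]
  · intro s t
    have hP : ∀ (u : ℝ) (p q : Fin N × Fin m),
        (stackU N U u * (stackU N U u)ᴴ) p q = (U u * (U u)ᴴ) p.2 q.2 / (N : ℂ) := by
      intro u p q
      simp only [mul_apply, conjTranspose_apply, stackU, ← hc, key2, ← Finset.sum_div]
    simp only [trace, diag_apply, mul_apply]
    simp only [matDeriv, hP]
    simp only [trace, diag_apply, mul_apply, matDeriv, hP, deriv_div_const,
      Fintype.sum_prod_type, div_mul_div_comm, Finset.sum_const, Finset.card_univ,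
      Fintype.card_fin, nsmul_eq_mul, Finset.mul_sum]
    apply Finset.sum_congr rfl; intros a _
    apply Finset.sum_congr rfl; intros c _
    field_simp
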